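/- There is no positive (10,8)-reverse multiple; that is, there is no positive integer M such that the reversal of the decimal digit expansion of M equals the decimal digit expansion of 8·M. -/

import Mathlib

/-- There is no positive `(10, 8)`-reverse multiple. -/
theorem stmt_11 :
    ¬ ∃ M : ℕ, 0 < M ∧ (Nat.digits 10 M).reverse = Nat.digits 10 (8 * M) := by
  rintro ⟨M, hM, h⟩
  have hL : Nat.digits 10 M ≠ [] := Nat.digits_ne_nil_iff_ne_zero.mpr hM.ne'
  set L := Nat.digits 10 M with hLdef
  set d := L.getLast hL with hd
  -- digits of 8M start with (8M) % 10
  have h8M : (0:ℕ) < 8 * M := by omega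
  have hdig : Nat.digits 10 (8 * M) = (8 * M) % 10 :: Nat.digits 10 (8 * M / 10) :=
    Nat.digits_def' (by norm_num) h8M
  have hdval : d = (8 * M) % 10 := by
    have h1 : L.reverse.head? = some ((8 * M) % 10) := by rw [h, hdig]; rfl
    rw [List.head?_reverse, List.getLast?_eq_getLast hL] at h1
    exact Option.some.inj h1
  have hdne : d ≠ 0 := Nat.getLast_digit_ne_zero 10 hM.ne'
  have hdeven : d % 2 = 0 := by
    rw [hdval]
    omega
  have hd2 : 2 ≤ d := by omega
  -- M ≥ d * 10^(e-1)
  have hMval : M = Nat.ofDigits 10 L := (Nat.ofDigits_digits 10 M).symm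
  have hsplit : L = L.dropLast ++ [d] := (List.dropLast_append_getLast hL).symm
  have hMlb : (d : ℕ) * 10 ^ L.dropLast.length ≤ M := by
    conv_rhs => rw [hMval, hsplit]
    rw [Nat.ofDigits_append]
    simp [Nat.ofDigits]
    nlinarith [Nat.zero_le (Nat.ofDigits 10 L.dropLast)]
  -- 8M < 10 ^ (length L)
  have hlen : (Nat.digits 10 (8 * M)).length = L.length := by
    rw [← h]; simp
  have hub : 8 * M < 10 ^ L.length := by
    calc 8 * M < 10 ^ (Nat.digits 10 (8 * M)).length :=
          Nat.lt_base_pow_length_digits (by norm_num)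
      _ = 10 ^ L.length := by rw [hlen]
  have hlenL : L.length = L.dropLast.length + 1 := by
    rw [List.length_dropLast]
    have : 0 < L.length := List.length_pos_iff.mpr hL
    omega
  rw [hlenL, pow_succ] at hub
  have hp : 0 < 10 ^ L.dropLast.length := Nat.pow_pos (by norm_num)
  nlinarith
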